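/- Let X, X' be i.i.d. random variables on {0,1}^n, independent of the other randomness. Let K, K' be i.i.d. uniform on {0,1}^ℓ, and (U,V) uniform public randomness as in the hash h_{u,v}(k) = k ∥ (u·k + v)_lsb with λ = max{ℓ, n−ℓ}. Define Enc_{u,v}(k,x) = (u, v, x ⊕ h_{u,v}(k)). Then the collision probability satisfies Pr[Enc_{U,V}(K,X) = Enc_{U',V'}(K',X')] ≤ 2^{-2n}(1 + 2^{n−ℓ−H₂(X)}), where (U',V') is an independent copy of (U,V). -/

import Mathlib

open Finset

private lemma append_sub' {α : Type*} [AddGroup α] {l m : ℕ}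
    (a c : Fin l → α) (b d : Fin m → α) :
    Fin.append a b - Fin.append c d = Fin.append (a - c) (b - d) := by
  funext i
  induction i using Fin.addCases <;>
    simp [Fin.append_left, Fin.append_right]

private lemma append_zero' {α : Type*} [AddGroup α] {l m : ℕ} :
    Fin.append (0 : Fin l → α) (0 : Fin m → α) = 0 := by
  funext i
  induction i using Fin.addCases <;>
    simp [Fin.append_left, Fin.append_right]

private lemma append_bijective {α : Type*} {l m : ℕ} :
    Function.Bijective (fun ab : (Fin l → α) × (Fin m → α) => Fin.append ab.1 ab.2) := by
  constructor
  · rintro ⟨a, b⟩ ⟨c, d⟩ h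
    simp only [Prod.mk.injEq]
    constructor
    · funext j; have := congrFun h (Fin.castAdd m j); simpa [Fin.append_left] using this
    · funext j; have := congrFun h (Fin.natAdd l j); simpa [Fin.append_right] using this
  · intro f
    refine ⟨(fun j => f (Fin.castAdd m j), fun j => f (Fin.natAdd l j)), ?_⟩
    funext i
    induction i using Fin.addCases <;> simp [Fin.append_left, Fin.append_right]

private lemma fiber_card_const {A B : Type*} [AddCommGroup A] [AddCommGroup B]
    [Fintype A] [DecidableEq A] [DecidableEq B]
    (φ : A →+ B) (hφ : Function.Surjective φ) (a b : B) :
    (univ.filter (fun w => φ w = a)).card = (univ.filter (fun w => φ w = b)).card := by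
  obtain ⟨wa, hwa⟩ := hφ a
  obtain ⟨wb, hwb⟩ := hφ b
  apply Finset.card_bij' (fun w _ => w + (wb - wa)) (fun w _ => w - (wb - wa))
  · intro w hw
    simp only [mem_filter, mem_univ, true_and] at hw ⊢
    simp [map_add, map_sub, hw, hwa, hwb]
  · intro w hw
    simp only [mem_filter, mem_univ, true_and] at hw ⊢
    simp [map_sub, map_add, hw, hwa, hwb]
  · intro w _; abel
  · intro w _; abel

private lemma fiber_card_eq {A B : Type*} [AddCommGroup A] [AddCommGroup B]
    [Fintype A] [Fintype B] [DecidableEq A] [DecidableEq B]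
    (φ : A →+ B) (hφ : Function.Surjective φ) (c : ℕ)
    (hcardA : Fintype.card A = c * Fintype.card B) (b : B) :
    (univ.filter (fun w => φ w = b)).card = c := by
  have h1 : (univ : Finset A).card = ∑ b' : B, (univ.filter (fun w => φ w = b')).card :=
    Finset.card_eq_sum_card_fiberwise (fun x _ => mem_univ _)
  have h2 : ∑ b' : B, (univ.filter (fun w => φ w = b')).card
      = Fintype.card B * (univ.filter (fun w => φ w = b)).card := by
    rw [Finset.sum_congr rfl (fun b' _ => fiber_card_const φ hφ b' b), Finset.sum_const,
      smul_eq_mul, Finset.card_univ]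
  have h3 : Fintype.card B * (univ.filter (fun w => φ w = b)).card = Fintype.card B * c := by
    rw [← h2, ← h1, Finset.card_univ, hcardA]; ring
  exact Nat.eq_of_mul_eq_mul_left Fintype.card_pos h3

private lemma sum_comp_const_fiber {A B : Type*} [Fintype A] [Fintype B] [DecidableEq B]
    (φ : A → B) (c : ℕ) (hc : ∀ b, (univ.filter (fun a => φ a = b)).card = c)
    (g : B → ℝ) : ∑ a, g (φ a) = c * ∑ b, g b := by
  rw [← Finset.sum_fiberwise univ φ (fun a => g (φ a))]
  rw [Finset.mul_sum]
  refine Finset.sum_congr rfl fun b _ => ?_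
  rw [Finset.sum_congr rfl (fun a ha => ?_), Finset.sum_const, hc b, nsmul_eq_mul]
  simp only [mem_filter] at ha
  rw [ha.2]

/-- Theorem 1 of the paper: collision probability of the ciphertext.
Here `n = ℓ + m` (so `m = n - ℓ`), `λ = max{ℓ, m}`, messages live in
`{0,1}^n = Fin (ℓ+m) → ZMod 2` with distribution `p`,
`Enc_{u,v}(k,x) = (u, v, x ⊕ (k ∥ ((u·inj k)_lsb + v)))`, and all of
`u, v, k` (and the independent copies) are uniform.  The collision probability of
two independent ciphertexts is at most `2^{-2n}(1 + 2^{n-ℓ} · 2^{-H₂(X)})`,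
where `2^{-H₂(X)} = ∑ x, p x ^ 2`. -/
theorem stmt_4 {l m lam : ℕ} (hlam : lam = max l m)
    {F : Type*} [Field F] [Fintype F] [DecidableEq F]
    (hcard : Fintype.card F = 2 ^ lam)
    (lsb : F →+ (Fin m → ZMod 2)) (hlsb : Function.Surjective lsb)
    (inj : (Fin l → ZMod 2) →+ F) (hinj : Function.Injective inj)
    (p : (Fin (l + m) → ZMod 2) → ℝ) (hp : ∀ x, 0 ≤ p x) (hpsum : ∑ x, p x = 1) :
    (∑ u : F, ∑ v : Fin m → ZMod 2, ∑ u' : F, ∑ v' : Fin m → ZMod 2,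
      ∑ k : Fin l → ZMod 2, ∑ k' : Fin l → ZMod 2,
      ∑ x : Fin (l + m) → ZMod 2, ∑ x' : Fin (l + m) → ZMod 2,
        (1 / (2 ^ lam * 2 ^ m * 2 ^ l) : ℝ) ^ 2 * p x * p x' *
          (if (u, v, x + Fin.append k (lsb (u * inj k) + v))
              = (u', v', x' + Fin.append k' (lsb (u' * inj k') + v')) then 1 else 0))
    ≤ (1 / 2 ^ (2 * (l + m)) : ℝ) * (1 + 2 ^ m * ∑ x, p x ^ 2) := by
  classical
  have hml : m ≤ lam := hlam ▸ le_max_right l m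
  have hll : l ≤ lam := hlam ▸ le_max_left l m
  obtain ⟨t, htm⟩ : ∃ t, lam = t + m := ⟨lam - m, by omega⟩
  set c2 : ℝ := (1 / (2 ^ lam * 2 ^ m * 2 ^ l) : ℝ) ^ 2 with hc2
  have hc2nonneg : 0 ≤ c2 := sq_nonneg _
  -- Step 1: collapse x'
  have h1 : ∀ (u : F) (v : Fin m → ZMod 2) (u' : F) (v' : Fin m → ZMod 2)
      (k k' : Fin l → ZMod 2) (x : Fin (l+m) → ZMod 2),
      (∑ x' : Fin (l + m) → ZMod 2,
        (1 / (2 ^ lam * 2 ^ m * 2 ^ l) : ℝ) ^ 2 * p x * p x' *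
          (if (u, v, x + Fin.append k (lsb (u * inj k) + v))
              = (u', v', x' + Fin.append k' (lsb (u' * inj k') + v')) then 1 else 0))
      = if u = u' ∧ v = v' then
          (1 / (2 ^ lam * 2 ^ m * 2 ^ l) : ℝ) ^ 2 *
            (p x * p (x + Fin.append k (lsb (u * inj k) + v)
                - Fin.append k' (lsb (u' * inj k') + v'))) else 0 := by
    intro u v u' v' k k' x
    calc (∑ x' : Fin (l + m) → ZMod 2,
          (1 / (2 ^ lam * 2 ^ m * 2 ^ l) : ℝ) ^ 2 * p x * p x' *
            (if (u, v, x + Fin.append k (lsb (u * inj k) + v))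
                = (u', v', x' + Fin.append k' (lsb (u' * inj k') + v')) then 1 else 0))
        = ∑ x' : Fin (l + m) → ZMod 2,
            if (x + Fin.append k (lsb (u * inj k) + v)
                - Fin.append k' (lsb (u' * inj k') + v')) = x' then
              (if u = u' ∧ v = v' then
                (1 / (2 ^ lam * 2 ^ m * 2 ^ l) : ℝ) ^ 2 * (p x * p x') else 0) else 0 := by
          refine Finset.sum_congr rfl fun x' _ => ?_
          by_cases hu : u = u' <;> by_cases hv : v = v' <;>
            by_cases hx : x + Fin.append k (lsb (u * inj k) + v)
                = x' + Fin.append k' (lsb (u' * inj k') + v') <;>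
            simp [hu, hv, hx, Prod.ext_iff, sub_eq_iff_eq_add] <;> ring_nf
      _ = _ := by
          rw [Finset.sum_ite_eq univ _ (fun x' => if u = u' ∧ v = v' then
                (1 / (2 ^ lam * 2 ^ m * 2 ^ l) : ℝ) ^ 2 * (p x * p x') else 0)]
          simp
  -- Step 2: collapse u', v'
  have h3 : ∀ (W : F → (Fin m → ZMod 2) → ℝ) (u : F) (v : Fin m → ZMod 2),
      (∑ u' : F, ∑ v' : Fin m → ZMod 2, if u = u' ∧ v = v' then W u' v' else 0) = W u v := by
    intro W u v
    have hv : ∀ u' : F, (∑ v' : Fin m → ZMod 2, if u = u' ∧ v = v' then W u' v' else 0)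
        = if u = u' then W u' v else 0 := by
      intro u'
      by_cases h : u = u'
      · simp only [h, true_and, if_true]
        rw [Finset.sum_ite_eq univ v (W u')]; simp
      · simp [h]
    simp only [hv]
    rw [Finset.sum_ite_eq univ u (fun u' => W u' v)]; simp
  have E1 : (∑ u : F, ∑ v : Fin m → ZMod 2, ∑ u' : F, ∑ v' : Fin m → ZMod 2,
      ∑ k : Fin l → ZMod 2, ∑ k' : Fin l → ZMod 2,
      ∑ x : Fin (l + m) → ZMod 2, ∑ x' : Fin (l + m) → ZMod 2,
        (1 / (2 ^ lam * 2 ^ m * 2 ^ l) : ℝ) ^ 2 * p x * p x' *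
          (if (u, v, x + Fin.append k (lsb (u * inj k) + v))
              = (u', v', x' + Fin.append k' (lsb (u' * inj k') + v')) then 1 else 0))
      = c2 * ∑ u : F, ∑ v : Fin m → ZMod 2, ∑ k : Fin l → ZMod 2, ∑ k' : Fin l → ZMod 2,
          ∑ x : Fin (l + m) → ZMod 2,
            p x * p (x + Fin.append k (lsb (u * inj k) + v)
              - Fin.append k' (lsb (u * inj k') + v)) := by
    simp only [h1]
    have h2 : ∀ (u : F) (v : Fin m → ZMod 2) (u' : F) (v' : Fin m → ZMod 2),
        (∑ k : Fin l → ZMod 2, ∑ k' : Fin l → ZMod 2, ∑ x : Fin (l + m) → ZMod 2,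
          if u = u' ∧ v = v' then
            (1 / (2 ^ lam * 2 ^ m * 2 ^ l) : ℝ) ^ 2 *
              (p x * p (x + Fin.append k (lsb (u * inj k) + v)
                  - Fin.append k' (lsb (u' * inj k') + v'))) else 0)
        = if u = u' ∧ v = v' then
            (∑ k : Fin l → ZMod 2, ∑ k' : Fin l → ZMod 2, ∑ x : Fin (l + m) → ZMod 2,
              (1 / (2 ^ lam * 2 ^ m * 2 ^ l) : ℝ) ^ 2 *
                (p x * p (x + Fin.append k (lsb (u * inj k) + v)
                  - Fin.append k' (lsb (u' * inj k') + v')))) else 0 := by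
      intro u v u' v'
      split_ifs <;> simp
    simp only [h2]
    rw [Finset.mul_sum]
    refine Finset.sum_congr rfl fun u _ => ?_
    rw [Finset.mul_sum]
    refine Finset.sum_congr rfl fun v _ => ?_
    rw [h3 (fun u' v' => ∑ k : Fin l → ZMod 2, ∑ k' : Fin l → ZMod 2,
        ∑ x : Fin (l + m) → ZMod 2,
          (1 / (2 ^ lam * 2 ^ m * 2 ^ l) : ℝ) ^ 2 *
            (p x * p (x + Fin.append k (lsb (u * inj k) + v)
              - Fin.append k' (lsb (u' * inj k') + v')))) u v]
    simp only [← Finset.mul_sum]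
    rfl
  rw [E1]
  -- Step 3: simplify the difference
  have hAsub : ∀ (u : F) (v : Fin m → ZMod 2) (k k' : Fin l → ZMod 2),
      Fin.append k (lsb (u * inj k) + v) - Fin.append k' (lsb (u * inj k') + v)
        = Fin.append (k - k') (lsb (u * inj (k - k'))) := by
    intro u v k k'
    rw [append_sub']
    rw [add_sub_add_right_eq_sub, ← map_sub, ← mul_sub, ← map_sub]
  have hsub3 : ∀ (x : Fin (l+m) → ZMod 2) (u : F) (v : Fin m → ZMod 2) (k k' : Fin l → ZMod 2),
      p (x + Fin.append k (lsb (u * inj k) + v) - Fin.append k' (lsb (u * inj k') + v))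
        = p (x + Fin.append (k - k') (lsb (u * inj (k - k')))) := by
    intro x u v k k'
    rw [add_sub_assoc, hAsub]
  simp only [hsub3]
  -- Step 4: v-sum is constant, reindex k over k - k'
  have hcardK : (Fintype.card (Fin l → ZMod 2) : ℝ) = 2 ^ l := by
    simp [Fintype.card_fun]
  have hcardM : (Fintype.card (Fin m → ZMod 2) : ℝ) = 2 ^ m := by
    simp [Fintype.card_fun]
  have hk : ∀ u : F,
      (∑ k : Fin l → ZMod 2, ∑ k' : Fin l → ZMod 2, ∑ x : Fin (l + m) → ZMod 2,
        p x * p (x + Fin.append (k - k') (lsb (u * inj (k - k')))))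
      = (2 ^ l : ℝ) * ∑ d : Fin l → ZMod 2, ∑ x : Fin (l + m) → ZMod 2,
          p x * p (x + Fin.append d (lsb (u * inj d))) := by
    intro u
    rw [Finset.sum_comm]
    have hre : ∀ k' : Fin l → ZMod 2,
        (∑ k : Fin l → ZMod 2, ∑ x : Fin (l + m) → ZMod 2,
          p x * p (x + Fin.append (k - k') (lsb (u * inj (k - k')))))
        = ∑ d : Fin l → ZMod 2, ∑ x : Fin (l + m) → ZMod 2,
            p x * p (x + Fin.append d (lsb (u * inj d))) := by
      intro k'
      exact Fintype.sum_equiv (Equiv.subRight k') _ _ (fun k => rfl)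
    simp only [hre, Finset.sum_const, Finset.card_univ, nsmul_eq_mul]
    rw [hcardK]
  have E2 : (∑ u : F, ∑ v : Fin m → ZMod 2, ∑ k : Fin l → ZMod 2, ∑ k' : Fin l → ZMod 2,
        ∑ x : Fin (l + m) → ZMod 2,
          p x * p (x + Fin.append (k - k') (lsb (u * inj (k - k')))))
      = (2 ^ m : ℝ) * ((2 ^ l : ℝ) *
          ∑ d : Fin l → ZMod 2, ∑ u : F, ∑ x : Fin (l + m) → ZMod 2,
            p x * p (x + Fin.append d (lsb (u * inj d)))) := by
    calc (∑ u : F, ∑ v : Fin m → ZMod 2, ∑ k : Fin l → ZMod 2, ∑ k' : Fin l → ZMod 2,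
        ∑ x : Fin (l + m) → ZMod 2,
          p x * p (x + Fin.append (k - k') (lsb (u * inj (k - k')))))
        = ∑ u : F, (2 ^ m : ℝ) * ((2 ^ l : ℝ) *
            ∑ d : Fin l → ZMod 2, ∑ x : Fin (l + m) → ZMod 2,
              p x * p (x + Fin.append d (lsb (u * inj d)))) := by
          refine Finset.sum_congr rfl fun u _ => ?_
          rw [Finset.sum_const, Finset.card_univ, nsmul_eq_mul, hcardM, hk u]
      _ = (2 ^ m : ℝ) * ((2 ^ l : ℝ) *
            ∑ u : F, ∑ d : Fin l → ZMod 2, ∑ x : Fin (l + m) → ZMod 2,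
              p x * p (x + Fin.append d (lsb (u * inj d)))) := by
          rw [← Finset.mul_sum, ← Finset.mul_sum]
      _ = _ := by rw [Finset.sum_comm]
  rw [E2]
  -- Step 5: split d = 0 and d ≠ 0
  set T0 : ℝ := (2 ^ lam : ℝ) * ∑ x, p x ^ 2 with hT0
  have hd0 : (∑ u : F, ∑ x : Fin (l + m) → ZMod 2,
      p x * p (x + Fin.append (0 : Fin l → ZMod 2) (lsb (u * inj 0)))) = T0 := by
    have : ∀ u : F, (∑ x : Fin (l + m) → ZMod 2,
        p x * p (x + Fin.append (0 : Fin l → ZMod 2) (lsb (u * inj 0))))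
        = ∑ x, p x ^ 2 := by
      intro u
      refine Finset.sum_congr rfl fun x _ => ?_
      rw [map_zero, mul_zero, map_zero, append_zero', add_zero, sq]
    simp only [this, Finset.sum_const, Finset.card_univ, nsmul_eq_mul, hcard, hT0]
    push_cast
    ring
  have hdne : ∀ d : Fin l → ZMod 2, d ≠ 0 →
      (∑ u : F, ∑ x : Fin (l + m) → ZMod 2,
        p x * p (x + Fin.append d (lsb (u * inj d))))
      = (2 ^ t : ℝ) * ∑ a : Fin m → ZMod 2, ∑ x : Fin (l + m) → ZMod 2,
          p x * p (x + Fin.append d a) := by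
    intro d hd
    have hne : inj d ≠ 0 := by
      intro h
      exact hd (hinj (h.trans (map_zero inj).symm))
    have e1 : (∑ u : F, ∑ x : Fin (l + m) → ZMod 2,
        p x * p (x + Fin.append d (lsb (u * inj d))))
        = ∑ w : F, ∑ x : Fin (l + m) → ZMod 2, p x * p (x + Fin.append d (lsb w)) :=
      Fintype.sum_equiv (Equiv.mulRight₀ (inj d) hne) _ _ (fun u => rfl)
    rw [e1]
    have hfib : ∀ b, (univ.filter (fun w : F => lsb w = b)).card = 2 ^ t := by
      refine fiber_card_eq lsb hlsb (2 ^ t) ?_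
      have hcardMn : Fintype.card (Fin m → ZMod 2) = 2 ^ m := by simp [Fintype.card_fun]
      rw [hcard, htm, pow_add, hcardMn]
    have := sum_comp_const_fiber (fun w : F => lsb w) (2 ^ t) hfib
      (fun a => ∑ x : Fin (l + m) → ZMod 2, p x * p (x + Fin.append d a))
    rw [this]
    push_cast
    ring
  -- Step 6: bound the d ≠ 0 part
  set S2 : ℝ := ∑ x, p x ^ 2 with hS2def
  have hS2 : 0 ≤ S2 := Finset.sum_nonneg fun x _ => sq_nonneg _
  have hz : ∀ x : Fin (l + m) → ZMod 2, (∑ z : Fin (l + m) → ZMod 2, p (x + z)) = 1 :=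
    fun x => (Fintype.sum_bijective (fun z => x + z) (Equiv.addLeft x).bijective _ _
      (fun z => rfl)).trans hpsum
  have hQsum : (∑ d : Fin l → ZMod 2, ∑ a : Fin m → ZMod 2,
      ∑ x : Fin (l + m) → ZMod 2, p x * p (x + Fin.append d a)) = 1 := by
    calc (∑ d : Fin l → ZMod 2, ∑ a : Fin m → ZMod 2,
        ∑ x : Fin (l + m) → ZMod 2, p x * p (x + Fin.append d a))
        = ∑ da : (Fin l → ZMod 2) × (Fin m → ZMod 2),
            ∑ x : Fin (l + m) → ZMod 2, p x * p (x + Fin.append da.1 da.2) := by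
          rw [Fintype.sum_prod_type]
      _ = ∑ z : Fin (l + m) → ZMod 2, ∑ x : Fin (l + m) → ZMod 2, p x * p (x + z) :=
          Fintype.sum_bijective _ append_bijective _ _ (fun ab => rfl)
      _ = ∑ x : Fin (l + m) → ZMod 2, ∑ z : Fin (l + m) → ZMod 2, p x * p (x + z) :=
          Finset.sum_comm
      _ = ∑ x : Fin (l + m) → ZMod 2, p x := by
          refine Finset.sum_congr rfl fun x _ => ?_
          rw [← Finset.mul_sum, hz x, mul_one]
      _ = 1 := hpsum
  have hQnonneg : ∀ d : Fin l → ZMod 2, 0 ≤ ∑ a : Fin m → ZMod 2,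
      ∑ x : Fin (l + m) → ZMod 2, p x * p (x + Fin.append d a) :=
    fun d => Finset.sum_nonneg fun a _ => Finset.sum_nonneg fun x _ =>
      mul_nonneg (hp _) (hp _)
  have hT1le : (∑ d ∈ univ.erase (0 : Fin l → ZMod 2), ∑ u : F,
      ∑ x : Fin (l + m) → ZMod 2, p x * p (x + Fin.append d (lsb (u * inj d))))
      ≤ (2 ^ t : ℝ) := by
    calc (∑ d ∈ univ.erase (0 : Fin l → ZMod 2), ∑ u : F,
        ∑ x : Fin (l + m) → ZMod 2, p x * p (x + Fin.append d (lsb (u * inj d))))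
        = ∑ d ∈ univ.erase (0 : Fin l → ZMod 2), (2 ^ t : ℝ) *
            ∑ a : Fin m → ZMod 2, ∑ x : Fin (l + m) → ZMod 2,
              p x * p (x + Fin.append d a) := by
          refine Finset.sum_congr rfl fun d hd => ?_
          exact hdne d (Finset.ne_of_mem_erase hd)
      _ = (2 ^ t : ℝ) * ∑ d ∈ univ.erase (0 : Fin l → ZMod 2),
            ∑ a : Fin m → ZMod 2, ∑ x : Fin (l + m) → ZMod 2,
              p x * p (x + Fin.append d a) := by rw [Finset.mul_sum]
      _ ≤ (2 ^ t : ℝ) * ∑ d : Fin l → ZMod 2,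
            ∑ a : Fin m → ZMod 2, ∑ x : Fin (l + m) → ZMod 2,
              p x * p (x + Fin.append d a) := by
          refine mul_le_mul_of_nonneg_left ?_ (by positivity)
          exact Finset.sum_le_sum_of_subset_of_nonneg (Finset.subset_univ _)
            (fun d _ _ => hQnonneg d)
      _ = (2 ^ t : ℝ) := by rw [hQsum, mul_one]
  have hTle : (∑ d : Fin l → ZMod 2, ∑ u : F,
      ∑ x : Fin (l + m) → ZMod 2, p x * p (x + Fin.append d (lsb (u * inj d))))
      ≤ T0 + (2 ^ t : ℝ) := by
    rw [← Finset.add_sum_erase univ _ (Finset.mem_univ (0 : Fin l → ZMod 2))]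
    exact add_le_add (le_of_eq hd0) hT1le
  -- Step 7: final arithmetic
  have step : c2 * ((2 ^ m : ℝ) * ((2 ^ l : ℝ) *
      ∑ d : Fin l → ZMod 2, ∑ u : F, ∑ x : Fin (l + m) → ZMod 2,
        p x * p (x + Fin.append d (lsb (u * inj d)))))
      ≤ c2 * ((2 ^ m : ℝ) * ((2 ^ l : ℝ) * (T0 + (2 ^ t : ℝ)))) := by
    refine mul_le_mul_of_nonneg_left ?_ hc2nonneg
    refine mul_le_mul_of_nonneg_left ?_ (by positivity)
    exact mul_le_mul_of_nonneg_left hTle (by positivity)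
  refine step.trans ?_
  have heq : c2 * ((2 ^ m : ℝ) * ((2 ^ l : ℝ) * (T0 + (2 ^ t : ℝ))))
      = (1 + 2 ^ m * S2) / (2 ^ lam * 2 ^ (2 * m) * 2 ^ l) := by
    rw [hT0, hc2, htm]
    have h1 : ((2:ℝ) ^ (t + m)) = 2 ^ t * 2 ^ m := pow_add 2 t m
    have h2 : ((2:ℝ) ^ (2 * m)) = 2 ^ m * 2 ^ m := by rw [two_mul, pow_add]
    rw [h1, h2]
    have hpos : ∀ n : ℕ, (0:ℝ) < 2 ^ n := fun n => by positivity
    field_simp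
    ring
  rw [heq]
  have hrhs : (1 / 2 ^ (2 * (l + m)) : ℝ) * (1 + 2 ^ m * S2)
      = (1 + 2 ^ m * S2) / 2 ^ (2 * (l + m)) := by ring
  rw [hrhs]
  apply div_le_div_of_nonneg_left (by positivity) (by positivity)
  calc ((2:ℝ) ^ (2 * (l + m))) ≤ 2 ^ (lam + 2 * m + l) := by
        apply pow_le_pow_right₀ one_le_two
        omega
    _ = 2 ^ lam * 2 ^ (2 * m) * 2 ^ l := by rw [pow_add, pow_add]
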